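/- Let p(x) = (1/4π)((x₃−c)/|x−ce₃|³ − (x₃−1/c)/(c³|x−e₃/c|³)) on B₁(0) ⊂ ℝ³ for c ∈ (0,1). Then the velocity w = −∇p restricted to the unit sphere equals w(x) = (3/4π)·(1−c²)/|x−ce₃|⁵ · (x₃x − e₃), which is tangent to the sphere at each point x ∈ ∂B₁(0). -/

import Mathlib

open MeasureTheory Real Set
open scoped InnerProductSpace

noncomputable section

local notation "E3" => EuclideanSpace ℝ (Fin 3)

lemma aux_qder (v : E3) (a : ℝ) (x : E3) (h : x ≠ v) :
    HasFDerivAt (fun y : E3 => (y 2 - a) / ‖y - v‖ ^ 3)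
      ((InnerProductSpace.toDual ℝ (E3))
        ((‖x - v‖ ^ 3)⁻¹ • (EuclideanSpace.single 2 (1:ℝ))
          - (3 * (x 2 - a) * (‖x - v‖ ^ 5)⁻¹) • (x - v))) x := by
  have hr : 0 < ‖x - v‖ := by
    rw [norm_pos_iff, sub_ne_zero]; exact h
  set r := ‖x - v‖ with hrdef
  have h2 : HasFDerivAt (fun y : E3 => ‖y - v‖ ^ 2) (2 • innerSL ℝ (x - v)) x := by
    have := ((hasFDerivAt_id x).sub_const v).norm_sq
    simpa using this
  have h3 : HasDerivAt (fun t : ℝ => (t * Real.sqrt t)⁻¹) (-(3/2) * (r^5)⁻¹) (r ^ 2) := by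
    have hpos : (0:ℝ) < r ^ 2 := by positivity
    have hd : HasDerivAt (fun t : ℝ => t * Real.sqrt t)
        (1 * Real.sqrt (r^2) + (r^2) * (1 / (2 * Real.sqrt (r^2)))) (r ^ 2) :=
      (hasDerivAt_id (r^2)).mul (Real.hasDerivAt_sqrt hpos.ne')
    have hne : (r^2 : ℝ) * Real.sqrt (r^2) ≠ 0 := by
      rw [Real.sqrt_sq hr.le]; positivity
    have := hd.inv hne
    refine this.congr_deriv ?_
    rw [Real.sqrt_sq hr.le]
    field_simp
    ring
  have h4 : HasFDerivAt (fun y : E3 => (‖y - v‖ ^ 3)⁻¹)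
      ((-(3/2) * (r^5)⁻¹) • (2 • innerSL ℝ (x - v))) x := by
    have := h3.comp_hasFDerivAt x h2
    refine this.congr_of_eventuallyEq (Filter.Eventually.of_forall fun y => ?_)
    show (‖y - v‖ ^ 3)⁻¹ = (‖y - v‖ ^ 2 * √(‖y - v‖ ^ 2))⁻¹
    congr 1
    rw [Real.sqrt_sq (norm_nonneg _)]
    ring
  have h1 : HasFDerivAt (fun y : E3 => y 2 - a)
      ((EuclideanSpace.proj (2 : Fin 3) : E3 →L[ℝ] ℝ)) x :=
    ((EuclideanSpace.proj (2 : Fin 3) : E3 →L[ℝ] ℝ)).hasFDerivAt.sub_const a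
  have h5 := h1.mul h4
  have heq : (fun y : E3 => (y 2 - a) / ‖y - v‖ ^ 3)
      = fun y : E3 => (y 2 - a) * (‖y - v‖ ^ 3)⁻¹ := by
    funext y; rw [div_eq_mul_inv]
  rw [heq]
  refine h5.congr_fderiv ?_
  ext y
  simp [inner_sub_left, inner_smul_left, real_inner_smul_left, inner_sub_right,
    EuclideanSpace.inner_single_left, InnerProductSpace.toDual_apply_apply,
    ContinuousLinearMap.smul_apply, smul_eq_mul]
  rw [← hrdef]
  field_simp
  ring

/-- for the pressure
`p(x) = (1/4π)((x₃−c)/|x−ce₃|³ − (x₃−1/c)/(c³|x−e₃/c|³))` on `B₁(0) ⊂ ℝ³`,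
`c ∈ (0,1)`, the velocity `w = −∇p` restricted to the unit sphere equals
`w(x) = (3/4π)·(1−c²)/|x−ce₃|⁵ · (x₃ x − e₃)`, which is tangent to the sphere
at each point `x ∈ ∂B₁(0)`. -/
theorem statement2 (c : ℝ) (hc : c ∈ Set.Ioo (0 : ℝ) 1)
    (e₃ : EuclideanSpace ℝ (Fin 3)) (he₃ : e₃ = EuclideanSpace.single 2 1)
    (p : EuclideanSpace ℝ (Fin 3) → ℝ)
    (hp : ∀ x : EuclideanSpace ℝ (Fin 3), p x =
      (4 * π)⁻¹ * ((x 2 - c) / ‖x - c • e₃‖ ^ 3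
        - (x 2 - 1 / c) / (c ^ 3 * ‖x - c⁻¹ • e₃‖ ^ 3)))
    (w : EuclideanSpace ℝ (Fin 3) → EuclideanSpace ℝ (Fin 3))
    (hw : ∀ x : EuclideanSpace ℝ (Fin 3), w x =
      ((3 / (4 * π)) * ((1 - c ^ 2) / ‖x - c • e₃‖ ^ 5)) • (x 2 • x - e₃)) :
    ∀ x : EuclideanSpace ℝ (Fin 3), ‖x‖ = 1 →
      -gradient p x = w x ∧ ⟪w x, x⟫_ℝ = 0 := by
  obtain ⟨hc0, hc1⟩ := hc
  intro x hx
  have hπ : (π : ℝ) ≠ 0 := Real.pi_ne_zero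
  have hee : ‖e₃‖ = 1 := by rw [he₃]; simp
  have hinner : ⟪x, e₃⟫_ℝ = x 2 := by
    rw [he₃, EuclideanSpace.inner_single_right]; simp
  have hx1 : x ≠ c • e₃ := by
    intro h
    rw [h, norm_smul, hee] at hx
    simp [abs_of_pos hc0] at hx
    linarith
  have hx2 : x ≠ c⁻¹ • e₃ := by
    intro h
    rw [h, norm_smul, hee] at hx
    rw [Real.norm_eq_abs, abs_of_pos (by positivity : (0:ℝ) < c⁻¹), mul_one,
      inv_eq_one] at hx
    linarith
  have hr : 0 < ‖x - c • e₃‖ := by rw [norm_pos_iff, sub_ne_zero]; exact hx1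
  set r := ‖x - c • e₃‖ with hrdef
  have hs : ‖x - c⁻¹ • e₃‖ = r / c := by
    have h1 : ‖x - c⁻¹ • e₃‖ ^ 2 = (r / c) ^ 2 := by
      rw [hrdef, div_pow, norm_sub_sq_real, norm_sub_sq_real, real_inner_smul_right,
        real_inner_smul_right, hinner, norm_smul, norm_smul, hee, hx,
        Real.norm_eq_abs, Real.norm_eq_abs,
        abs_of_pos hc0, abs_of_pos (by positivity : (0:ℝ) < c⁻¹)]
      field_simp
      ring
    have h2 : (0:ℝ) ≤ ‖x - c⁻¹ • e₃‖ := norm_nonneg _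
    have h3 : (0:ℝ) ≤ r / c := by positivity
    nlinarith [sq_nonneg (‖x - c⁻¹ • e₃‖ - r / c), sq_nonneg (‖x - c⁻¹ • e₃‖ + r / c)]
  -- the fderivs of the two summands
  have hq1 := aux_qder (c • e₃) c x hx1
  have hq2 := aux_qder (c⁻¹ • e₃) (1 / c) x hx2
  have heqp : p = fun y : E3 => (4 * π)⁻¹ *
      ((y 2 - c) / ‖y - c • e₃‖ ^ 3 - (c ^ 3)⁻¹ * ((y 2 - 1 / c) / ‖y - c⁻¹ • e₃‖ ^ 3)) := by
    funext y; rw [hp]; ring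
  have hps : HasFDerivAt p
      ((4 * π)⁻¹ • ((InnerProductSpace.toDual ℝ (E3))
        ((‖x - c • e₃‖ ^ 3)⁻¹ • (EuclideanSpace.single 2 (1:ℝ))
          - (3 * (x 2 - c) * (‖x - c • e₃‖ ^ 5)⁻¹) • (x - c • e₃))
        - (c ^ 3)⁻¹ • (InnerProductSpace.toDual ℝ (E3))
        ((‖x - c⁻¹ • e₃‖ ^ 3)⁻¹ • (EuclideanSpace.single 2 (1:ℝ))
          - (3 * (x 2 - 1 / c) * (‖x - c⁻¹ • e₃‖ ^ 5)⁻¹) • (x - c⁻¹ • e₃)))) x := by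
    rw [heqp]
    exact (hq1.sub (hq2.const_mul (c ^ 3)⁻¹)).const_mul (4 * π)⁻¹
  have hvec : (-(w x) : E3) = (4 * π)⁻¹ •
      (((‖x - c • e₃‖ ^ 3)⁻¹ • (EuclideanSpace.single 2 (1:ℝ))
          - (3 * (x 2 - c) * (‖x - c • e₃‖ ^ 5)⁻¹) • (x - c • e₃))
        - (c ^ 3)⁻¹ •
        ((‖x - c⁻¹ • e₃‖ ^ 3)⁻¹ • (EuclideanSpace.single 2 (1:ℝ))
          - (3 * (x 2 - 1 / c) * (‖x - c⁻¹ • e₃‖ ^ 5)⁻¹) • (x - c⁻¹ • e₃))) := by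
    rw [hw, ← he₃, hs, ← hrdef]
    match_scalars
    · field_simp
      ring
    · field_simp
      ring
  have hgrad : HasGradientAt p (-(w x)) x := by
    rw [hasGradientAt_iff_hasFDerivAt, hvec, _root_.map_smul, map_sub, _root_.map_smul]
    exact hps
  constructor
  · rw [hgrad.gradient, neg_neg]
  · rw [hw, real_inner_smul_left, inner_sub_left, real_inner_smul_left,
      real_inner_self_eq_norm_sq, hx, he₃, EuclideanSpace.inner_single_left]
    simp

end
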